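/- arXiv:1005.4344 — 2 statements merged into one kernel-verified Lean document; each statement's English description precedes it below -/
import Mathlib

section
/- For a signal f : {1,...,N} → [0,∞) with E[f] := max_i f(i)·Z(i) built from independent standard α-Fréchet Z(i), fix i₀ and let ξ := (max_{1≤i≤N} f(i)Z(i))/Z(i₀). Then P(ξ = f(i₀)) = f(i₀)^α / ∑_{i=1}^N f(i)^α, assuming f is not identically zero. -/
open MeasureTheory ProbabilityTheory Real

namespace PointQueryAux

open Set

lemma expMeasure_eq (r : ℝ) : expMeasure r = volume.withDensity (exponentialPDF r) := rfl

lemma measurable_exponentialPDF (r : ℝ) : Measurable (exponentialPDF r) :=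
  ENNReal.measurable_ofReal.comp (measurable_exponentialPDFReal r)

lemma rpow_neg_inv_le_iff {α u x : ℝ} (hα : 0 < α) (hu : 0 < u) (hx : 0 < x) :
    u ^ (-α⁻¹) ≤ x ↔ x ^ (-α) ≤ u := by
  rw [← inv_neg]
  exact Real.rpow_inv_le_iff_of_neg hu hx (neg_lt_zero.2 hα)

/-- CDF identification: a random variable with Fréchet CDF has law equal to the pushforward of an
exponential measure under `u ↦ u ^ (-α⁻¹)`. -/
lemma frechet_map_eq {Ω : Type*} [MeasurableSpace Ω] (μ : Measure Ω) [IsProbabilityMeasure μ]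
    {α a : ℝ} (hα : 0 < α) (ha : 0 < a) {X : Ω → ℝ} (hX : Measurable X)
    (h1 : ∀ x : ℝ, 0 < x → μ {ω | X ω ≤ x} = ENNReal.ofReal (Real.exp (-(a * x ^ (-α)))))
    (h0 : ∀ x : ℝ, x ≤ 0 → μ {ω | X ω ≤ x} = 0) :
    μ.map X = (expMeasure a).map (fun u : ℝ => u ^ (-α⁻¹)) := by
  have hT : Measurable fun u : ℝ => u ^ (-α⁻¹) := measurable_id.pow_const _
  haveI : IsProbabilityMeasure (expMeasure a) := isProbabilityMeasure_expMeasure ha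
  haveI := Measure.isProbabilityMeasure_map (μ := μ) hX.aemeasurable
  refine Measure.ext_of_Iic _ _ fun x => ?_
  rw [Measure.map_apply hX measurableSet_Iic, Measure.map_apply hT measurableSet_Iic]
  have hXIic : X ⁻¹' Iic x = {ω | X ω ≤ x} := rfl
  rw [hXIic]
  have hIic0 : expMeasure a (Iic (0 : ℝ)) = 0 := by
    rw [expMeasure_eq, withDensity_apply _ measurableSet_Iic,
      lintegral_exponentialPDF_eq_antiDeriv ha 0]
    simp
  have hsplit : expMeasure a ((fun u : ℝ => u ^ (-α⁻¹)) ⁻¹' Iic x)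
      = expMeasure a (((fun u : ℝ => u ^ (-α⁻¹)) ⁻¹' Iic x) ∩ Ioi 0) := by
    have h2 : expMeasure a (((fun u : ℝ => u ^ (-α⁻¹)) ⁻¹' Iic x) \ Ioi 0) = 0 := by
      refine measure_mono_null (fun u hu => ?_) hIic0
      simpa using le_of_not_gt (by simpa using hu.2)
    rw [← measure_inter_add_diff _ measurableSet_Ioi, h2, add_zero]
  rcases le_or_gt x 0 with hx | hx
  · have he : ((fun u : ℝ => u ^ (-α⁻¹)) ⁻¹' Iic x) ∩ Ioi 0 = ∅ := by
      ext u
      simp only [Set.mem_inter_iff, Set.mem_preimage, Set.mem_Iic, Set.mem_Ioi,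
        Set.mem_empty_iff_false, iff_false, not_and]
      intro h1u h2u
      exact absurd (lt_of_lt_of_le (Real.rpow_pos_of_pos h2u _) (le_trans h1u hx)) (lt_irrefl 0)
    rw [h0 x hx, hsplit, he, measure_empty]
  · have hc : 0 < x ^ (-α) := Real.rpow_pos_of_pos hx _
    have hset : ((fun u : ℝ => u ^ (-α⁻¹)) ⁻¹' Iic x) ∩ Ioi 0 = Ici (x ^ (-α)) := by
      ext u
      simp only [Set.mem_inter_iff, Set.mem_preimage, Set.mem_Iic, Set.mem_Ioi, Set.mem_Ici]
      constructor
      · rintro ⟨h1u, h2u⟩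
        exact (rpow_neg_inv_le_iff hα h2u hx).1 h1u
      · intro hu
        have hu0 : 0 < u := lt_of_lt_of_le hc hu
        exact ⟨(rpow_neg_inv_le_iff hα hu0 hx).2 hu, hu0⟩
    have hIio : expMeasure a (Iio (x ^ (-α)))
        = ENNReal.ofReal (1 - Real.exp (-(a * x ^ (-α)))) := by
      have hae : (Iio (x ^ (-α)) : Set ℝ) =ᵐ[expMeasure a] Iic (x ^ (-α)) := by
        refine Filter.EventuallyEq.filter_mono (Iio_ae_eq_Iic (μ := volume) (a := x ^ (-α))) ?_
        rw [expMeasure_eq]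
        exact (withDensity_absolutelyContinuous _ _).ae_le
      rw [measure_congr hae, expMeasure_eq, withDensity_apply _ measurableSet_Iic,
        lintegral_exponentialPDF_eq_antiDeriv ha, if_pos hc.le]
    have hle1 : Real.exp (-(a * x ^ (-α))) ≤ 1 :=
      Real.exp_le_one_iff.2 (neg_nonpos.2 (by positivity))
    rw [hsplit, hset, ← compl_Iio, measure_compl measurableSet_Iio (measure_ne_top _ _),
      measure_univ, hIio, h1 x hx, ← ENNReal.ofReal_one,
      ← ENNReal.ofReal_sub _ (by linarith : (0:ℝ) ≤ 1 - Real.exp (-(a * x ^ (-α))))]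
    norm_num

lemma frechet_lintegral {α a b : ℝ} (hα : 0 < α) (ha : 0 < a) (hb : 0 ≤ b) :
    ∫⁻ x, ENNReal.ofReal (Real.exp (-(b * x ^ (-α))))
        ∂((expMeasure a).map (fun u : ℝ => u ^ (-α⁻¹)))
      = ENNReal.ofReal (a / (a + b)) := by
  have hT : Measurable fun u : ℝ => u ^ (-α⁻¹) := measurable_id.pow_const _
  have hg : Measurable fun x : ℝ => ENNReal.ofReal (Real.exp (-(b * x ^ (-α)))) :=
    ENNReal.measurable_ofReal.comp (((measurable_id.pow_const _).const_mul b).neg.exp)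
  have hab : 0 < a + b := by linarith
  have hgT : Measurable fun u : ℝ =>
      ENNReal.ofReal (Real.exp (-(b * ((u ^ (-α⁻¹) : ℝ)) ^ (-α)))) :=
    ENNReal.measurable_ofReal.comp
      ((((((measurable_id.pow_const (-α⁻¹)).pow_const (-α)).const_mul b)).neg).exp)
  rw [lintegral_map hg hT, expMeasure_eq,
    lintegral_withDensity_eq_lintegral_mul _ (measurable_exponentialPDF a) hgT]
  have hae : ∀ᵐ u : ℝ ∂volume, u ≠ 0 := by
    refine ae_iff.2 ?_
    have : {u : ℝ | ¬ u ≠ 0} = {0} := by ext u; simp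
    rw [this]
    exact measure_singleton 0
  have hcongr : (fun u : ℝ => (exponentialPDF a * fun u : ℝ =>
        ENNReal.ofReal (Real.exp (-(b * (u ^ (-α⁻¹)) ^ (-α))))) u)
      =ᵐ[volume] fun u : ℝ => ENNReal.ofReal (a / (a + b)) * exponentialPDF (a + b) u := by
    filter_upwards [hae] with u hu
    rcases lt_or_gt_of_ne hu with hneg | hpos
    · simp [Pi.mul_apply, exponentialPDF_of_neg hneg]
    · have hru : (u ^ (-α⁻¹) : ℝ) ^ (-α) = u := by
        rw [← Real.rpow_mul hpos.le, neg_mul_neg, inv_mul_cancel₀ hα.ne', Real.rpow_one]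
      simp only [Pi.mul_apply, hru, exponentialPDF_of_nonneg hpos.le]
      rw [← ENNReal.ofReal_mul (by positivity), ← ENNReal.ofReal_mul (by positivity)]
      congr 1
      rw [mul_assoc, ← Real.exp_add, show -(a * u) + -(b * u) = -((a + b) * u) by ring]
      field_simp
  rw [lintegral_congr_ae hcongr, lintegral_const_mul _ (measurable_exponentialPDF _),
    lintegral_exponentialPDF_eq_one hab, mul_one]

/-- For independent `X ~ Fréchet(a)` and `Y` with Fréchet-type CDF of scale `b` on positive reals,
`P(Y ≤ X) = a / (a + b)`. -/
lemma prob_le_frechet {Ω : Type*} [MeasurableSpace Ω] (μ : Measure Ω) [IsProbabilityMeasure μ]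
    {α a b : ℝ} (hα : 0 < α) (ha : 0 < a) (hb : 0 ≤ b)
    {X Y : Ω → ℝ} (hX : Measurable X) (hY : Measurable Y) (hXY : IndepFun X Y μ)
    (h1 : ∀ x : ℝ, 0 < x → μ {ω | X ω ≤ x} = ENNReal.ofReal (Real.exp (-(a * x ^ (-α)))))
    (h0 : ∀ x : ℝ, x ≤ 0 → μ {ω | X ω ≤ x} = 0)
    (hY1 : ∀ x : ℝ, 0 < x → μ {ω | Y ω ≤ x} = ENNReal.ofReal (Real.exp (-(b * x ^ (-α))))) :
    μ {ω | Y ω ≤ X ω} = ENNReal.ofReal (a / (a + b)) := by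
  have hmapX := frechet_map_eq μ hα ha hX h1 h0
  have hprod := (indepFun_iff_map_prod_eq_prod_map_map hX.aemeasurable hY.aemeasurable).1 hXY
  haveI : IsProbabilityMeasure (μ.map Y) := Measure.isProbabilityMeasure_map hY.aemeasurable
  have hs : MeasurableSet {p : ℝ × ℝ | p.2 ≤ p.1} := measurableSet_le measurable_snd measurable_fst
  have hpre : {ω | Y ω ≤ X ω} = (fun ω => (X ω, Y ω)) ⁻¹' {p : ℝ × ℝ | p.2 ≤ p.1} := rfl
  rw [hpre, ← Measure.map_apply (hX.prodMk hY) hs, hprod, Measure.prod_apply hs]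
  have hpos : ∀ᵐ x ∂(μ.map X), 0 < x := by
    refine ae_iff.2 ?_
    have : {x : ℝ | ¬ 0 < x} = Iic 0 := by ext y; simp [not_lt]
    rw [this, Measure.map_apply hX measurableSet_Iic]
    exact h0 0 le_rfl
  have hcong : (fun x => (μ.map Y) (Prod.mk x ⁻¹' {p : ℝ × ℝ | p.2 ≤ p.1}))
      =ᵐ[μ.map X] fun x => ENNReal.ofReal (Real.exp (-(b * x ^ (-α)))) := by
    filter_upwards [hpos] with x hx
    have : (Prod.mk x ⁻¹' {p : ℝ × ℝ | p.2 ≤ p.1}) = Iic x := rfl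
    rw [this, Measure.map_apply hY measurableSet_Iic]
    exact hY1 x hx
  rw [lintegral_congr_ae hcong, hmapX, frechet_lintegral hα ha hb]

end PointQueryAux

open PointQueryAux Set

theorem point_query_single_sketch
    {Ω : Type*} [MeasurableSpace Ω] (μ : Measure Ω) [IsProbabilityMeasure μ]
    (α : ℝ) (hα : 0 < α) (N : ℕ) [NeZero N]
    (Z : Fin N → Ω → ℝ)
    (hmeas : ∀ i, Measurable (Z i))
    (hindep : iIndepFun Z μ)
    (hcdf : ∀ i, ∀ x : ℝ, 0 < x →
      μ {ω | Z i ω ≤ x} = ENNReal.ofReal (Real.exp (-(x ^ (-α)))))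
    (hcdf0 : ∀ i, ∀ x : ℝ, x ≤ 0 → μ {ω | Z i ω ≤ x} = 0)
    (f : Fin N → ℝ) (hf : ∀ i, 0 ≤ f i)
    (hfpos : 0 < ∑ i, f i ^ α)
    (i₀ : Fin N) :
    μ {ω | (⨆ i, f i * Z i ω) / Z i₀ ω = f i₀}
      = ENNReal.ofReal (f i₀ ^ α / ∑ i, f i ^ α) := by
  classical
  -- a.e. positivity of all the Z i
  have hZpos : ∀ᵐ ω ∂μ, ∀ i, 0 < Z i ω := by
    rw [ae_all_iff]
    intro i
    refine ae_iff.2 ?_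
    have : {ω | ¬ 0 < Z i ω} = {ω | Z i ω ≤ 0} := by ext ω; simp [not_lt]
    rw [this]
    exact hcdf0 i 0 le_rfl
  -- per-factor CDF computation
  have hfac : ∀ (i : Fin N) (x : ℝ), 0 < x →
      μ {ω | f i * Z i ω ≤ x} = ENNReal.ofReal (Real.exp (-(f i ^ α * x ^ (-α)))) := by
    intro i x hx
    rcases eq_or_lt_of_le (hf i) with hfi | hfi
    · have hset : {ω | f i * Z i ω ≤ x} = univ := by
        ext ω; simp [← hfi, hx.le]
      rw [hset, measure_univ, ← hfi, Real.zero_rpow hα.ne', zero_mul, neg_zero, Real.exp_zero,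
        ENNReal.ofReal_one]
    · have hset : {ω | f i * Z i ω ≤ x} = {ω | Z i ω ≤ x / f i} := by
        ext ω
        rw [Set.mem_setOf_eq, Set.mem_setOf_eq, le_div_iff₀ hfi, mul_comm]
      have hexp : (x / f i) ^ (-α) = f i ^ α * x ^ (-α) := by
        rw [Real.rpow_neg (by positivity), Real.div_rpow hx.le (hf i), inv_div,
          div_eq_mul_inv, ← Real.rpow_neg hx.le]
      rw [hset, hcdf i _ (div_pos hx hfi), hexp]
  have hfac0 : ∀ (i : Fin N), 0 < f i → ∀ x : ℝ, x ≤ 0 →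
      μ {ω | f i * Z i ω ≤ x} = 0 := by
    intro i hfi x hx
    have hset : {ω | f i * Z i ω ≤ x} = {ω | Z i ω ≤ x / f i} := by
      ext ω
      rw [Set.mem_setOf_eq, Set.mem_setOf_eq, le_div_iff₀ hfi, mul_comm]
    rw [hset]
    exact hcdf0 i _ (div_nonpos_iff.2 (Or.inr ⟨hx, hfi.le⟩))
  rcases eq_or_lt_of_le (hf i₀) with hfi₀ | hfi₀
  · -- f i₀ = 0 : both sides are zero
    have hzero : f i₀ ^ α = 0 := by rw [← hfi₀, Real.zero_rpow hα.ne']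
    rw [hzero, zero_div, ENNReal.ofReal_zero]
    -- there is some j with 0 < f j
    have hj : ∃ j, 0 < f j := by
      by_contra h
      push_neg at h
      have h0' : ∀ i, f i = 0 := fun i => le_antisymm (h i) (hf i)
      have : ∑ i, f i ^ α = 0 :=
        Finset.sum_eq_zero fun i _ => by rw [h0' i, Real.zero_rpow hα.ne']
      linarith
    obtain ⟨j, hjpos⟩ := hj
    refine le_antisymm ?_ (zero_le)
    have hnull : μ {ω | ¬ ∀ i, 0 < Z i ω} = 0 := by
      rw [← ae_iff]; exact hZpos
    refine le_trans (measure_mono ?_) hnull.le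
    intro ω hω
    have heq : (⨆ i, f i * Z i ω) / Z i₀ ω = f i₀ := hω
    intro hall
    have hsup : f j * Z j ω ≤ ⨆ i, f i * Z i ω :=
      le_ciSup (f := fun i => f i * Z i ω) (Set.Finite.bddAbove (Set.finite_range _)) j
    have hsuppos : 0 < ⨆ i, f i * Z i ω :=
      lt_of_lt_of_le (mul_pos hjpos (hall j)) hsup
    have : (0 : ℝ) < (⨆ i, f i * Z i ω) / Z i₀ ω := div_pos hsuppos (hall i₀)
    rw [heq, ← hfi₀] at this
    exact lt_irrefl 0 this
  · -- main case : f i₀ > 0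
    set s : Finset (Fin N) := Finset.univ.erase i₀ with hs_def
    set a : ℝ := f i₀ ^ α with ha_def
    set b : ℝ := ∑ i ∈ s, f i ^ α with hb_def
    have ha : 0 < a := Real.rpow_pos_of_pos hfi₀ α
    have hb : 0 ≤ b := Finset.sum_nonneg fun i _ => Real.rpow_nonneg (hf i) α
    have habS : a + b = ∑ i, f i ^ α := by
      rw [ha_def, hb_def, hs_def]
      exact Finset.add_sum_erase Finset.univ (fun i => f i ^ α) (Finset.mem_univ i₀)
    set X : Ω → ℝ := fun ω => f i₀ * Z i₀ ω with hX_def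
    set Y : Ω → ℝ := fun ω => ⨆ i : ↥s, f (i : Fin N) * Z (i : Fin N) ω with hY_def
    have hXm : Measurable X := (hmeas i₀).const_mul _
    have hYm : Measurable Y := Measurable.iSup fun i => (hmeas (i : Fin N)).const_mul _
    -- event equality a.e.
    have hev : μ {ω | (⨆ i, f i * Z i ω) / Z i₀ ω = f i₀} = μ {ω | Y ω ≤ X ω} := by
      refine measure_congr ?_
      refine Filter.eventuallyEq_set.2 ?_
      filter_upwards [hZpos] with ω hω
      have hZ0 : Z i₀ ω ≠ 0 := (hω i₀).ne'
      have hXpos : 0 < X ω := mul_pos hfi₀ (hω i₀)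
      show (⨆ i, f i * Z i ω) / Z i₀ ω = f i₀ ↔ Y ω ≤ X ω
      rw [div_eq_iff hZ0]
      constructor
      · intro h
        refine Real.iSup_le (fun j => ?_) hXpos.le
        have : f (j : Fin N) * Z (j : Fin N) ω ≤ ⨆ i, f i * Z i ω :=
          le_ciSup (f := fun i => f i * Z i ω) (Set.Finite.bddAbove (Set.finite_range _))
            (j : Fin N)
        calc f (j : Fin N) * Z (j : Fin N) ω ≤ ⨆ i, f i * Z i ω := this
          _ = f i₀ * Z i₀ ω := h
      · intro h
        refine le_antisymm ?_ ?_
        · refine Real.iSup_le (fun i => ?_) hXpos.le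
          by_cases hii : i = i₀
          · rw [hii]
          · have hi_mem : i ∈ s := Finset.mem_erase.2 ⟨hii, Finset.mem_univ i⟩
            have : f i * Z i ω ≤ Y ω :=
              le_ciSup (f := fun i : ↥s => f (i : Fin N) * Z (i : Fin N) ω)
                (Set.Finite.bddAbove (Set.finite_range _)) (⟨i, hi_mem⟩ : ↥s)
            exact this.trans h
        · exact le_ciSup (f := fun i => f i * Z i ω) (Set.Finite.bddAbove (Set.finite_range _)) i₀
    -- CDF of X
    have hX1 : ∀ x : ℝ, 0 < x →
        μ {ω | X ω ≤ x} = ENNReal.ofReal (Real.exp (-(a * x ^ (-α)))) :=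
      fun x hx => hfac i₀ x hx
    have hX0 : ∀ x : ℝ, x ≤ 0 → μ {ω | X ω ≤ x} = 0 := fun x hx => hfac0 i₀ hfi₀ x hx
    -- CDF of Y
    have hY1 : ∀ x : ℝ, 0 < x →
        μ {ω | Y ω ≤ x} = ENNReal.ofReal (Real.exp (-(b * x ^ (-α)))) := by
      intro x hx
      have hYset : {ω | Y ω ≤ x} = ⋂ i ∈ s, Z i ⁻¹' {z : ℝ | f i * z ≤ x} := by
        ext ω
        simp only [Set.mem_setOf_eq, Set.mem_iInter, Set.mem_preimage]
        constructor
        · intro h i hi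
          have : f i * Z i ω ≤ Y ω :=
            le_ciSup (f := fun i : ↥s => f (i : Fin N) * Z (i : Fin N) ω)
              (Set.Finite.bddAbove (Set.finite_range _)) (⟨i, hi⟩ : ↥s)
          exact this.trans h
        · intro h
          exact Real.iSup_le (fun j => h (j : Fin N) j.2) hx.le
      have hmeasb : ∀ i ∈ s,
          MeasurableSet[MeasurableSpace.comap (Z i) inferInstance]
            (Z i ⁻¹' {z : ℝ | f i * z ≤ x}) := by
        intro i _
        exact ⟨{z : ℝ | f i * z ≤ x},
          measurableSet_le (measurable_id.const_mul _) measurable_const, rfl⟩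
      rw [hYset, hindep.meas_biInter hmeasb]
      have hprodeq : ∀ i ∈ s, μ (Z i ⁻¹' {z : ℝ | f i * z ≤ x})
          = ENNReal.ofReal (Real.exp (-(f i ^ α * x ^ (-α)))) := fun i _ => hfac i x hx
      rw [Finset.prod_congr rfl hprodeq,
        ← ENNReal.ofReal_prod_of_nonneg (fun i _ => (Real.exp_pos _).le), ← Real.exp_sum]
      congr 2
      rw [Finset.sum_neg_distrib, hb_def, Finset.sum_mul]
    -- independence of X and Y
    have hd : Disjoint ({i₀} : Finset (Fin N)) s :=
      Finset.disjoint_singleton_left.2 (Finset.notMem_erase i₀ _)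
    have hbase := hindep.indepFun_finset {i₀} s hd hmeas
    have hφ : Measurable fun v : (i : ({i₀} : Finset (Fin N))) → ℝ =>
        f i₀ * v ⟨i₀, Finset.mem_singleton_self i₀⟩ :=
      (measurable_pi_apply _).const_mul _
    have hψ : Measurable fun v : (i : ↥s) → ℝ => ⨆ i : ↥s, f (i : Fin N) * v i :=
      Measurable.iSup fun i => (measurable_pi_apply i).const_mul _
    have hXY : IndepFun X Y μ := hbase.comp hφ hψ
    rw [hev, prob_le_frechet μ hα ha hb hXm hYm hXY hX1 hX0 hY1, habS]
end

section
/- Let Z' and Z'' be independent standard α-Fréchet random variables, c > 0, η ∈ (0,1/2), and define ξ* := c·((1+η)/(1-η))·Z'/Z'' and ξ_* := c·((1-η)/(1+η))·Z'/Z''. Then sup_{x>0} |F_{ξ_*}(x) - F_{ξ*}(x)| ≤ α·2^{4α+3}·η, where F denotes the cumulative distribution function. -/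
open MeasureTheory ProbabilityTheory Real

lemma key_real (α : ℝ) (hα : 0 < α) (η : ℝ) (hη : 0 < η) (hη2 : η < 1/2) (s : ℝ) (hs : 0 < s) :
    Real.exp (-((((1+η)/(1-η))^2 : ℝ) ^ (-α) * s)) - Real.exp (-s) ≤ α * 2 ^ (4*α+3) * η := by
  have h1η : (0:ℝ) < 1 - η := by linarith
  set k : ℝ := ((1+η)/(1-η))^2 with hk
  have hk1 : 1 < k := by
    have : 1 < (1+η)/(1-η) := by rw [lt_div_iff₀ h1η]; linarith
    nlinarith
  have hk0 : 0 < k := by linarith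
  set ρ : ℝ := k ^ (-α) with hρ
  have hρ0 : 0 < ρ := Real.rpow_pos_of_pos hk0 _
  have hρ1 : ρ ≤ 1 := by
    rw [hρ]
    calc k ^ (-α) ≤ k ^ (0:ℝ) := by
          apply Real.rpow_le_rpow_of_exponent_le hk1.le; linarith
      _ = 1 := Real.rpow_zero k
  -- step 1: diff ≤ (1-ρ) * s * exp(-(ρ s))
  have hfac : Real.exp (-s) = Real.exp (-(ρ*s)) * Real.exp (-((1-ρ)*s)) := by
    rw [← Real.exp_add]; ring_nf
  have h1 : Real.exp (-(ρ*s)) - Real.exp (-s) ≤ (1-ρ) * s * Real.exp (-(ρ*s)) := by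
    rw [hfac]
    have hu : 1 - Real.exp (-((1-ρ)*s)) ≤ (1-ρ)*s := by
      nlinarith [Real.add_one_le_exp (-((1-ρ)*s))]
    have he : 0 < Real.exp (-(ρ*s)) := Real.exp_pos _
    nlinarith
  -- step 2: s * exp(-(ρ s)) ≤ 1/ρ
  have h2 : s * Real.exp (-(ρ*s)) ≤ 1/ρ := by
    rw [le_div_iff₀ hρ0]
    have : ρ * s ≤ Real.exp (ρ*s) :=
      (le_add_of_nonneg_right zero_le_one).trans (Real.add_one_le_exp _)
    have he : Real.exp (-(ρ*s)) * Real.exp (ρ*s) = 1 := by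
      rw [← Real.exp_add]; simp
    nlinarith [Real.exp_pos (-(ρ*s)), Real.exp_pos (ρ*s), mul_pos hρ0 hs]
  have h3 : Real.exp (-(ρ*s)) - Real.exp (-s) ≤ (1-ρ) * (1/ρ) := by
    have h1ρ : 0 ≤ 1 - ρ := by linarith
    calc Real.exp (-(ρ*s)) - Real.exp (-s) ≤ (1-ρ) * (s * Real.exp (-(ρ*s))) := by
          nlinarith
      _ ≤ (1-ρ) * (1/ρ) := by nlinarith
  -- bound 1-ρ ≤ 8αη
  have hlogk : Real.log k ≤ 8 * η := by
    have hr : (0:ℝ) < (1+η)/(1-η) := by positivity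
    have : Real.log k = 2 * Real.log ((1+η)/(1-η)) := by
      rw [hk, Real.log_pow]; push_cast; ring
    rw [this]
    have hl : Real.log ((1+η)/(1-η)) ≤ (1+η)/(1-η) - 1 := Real.log_le_sub_one_of_pos hr
    have : (1+η)/(1-η) - 1 ≤ 4*η := by
      rw [div_sub_one h1η.ne', div_le_iff₀ h1η]; nlinarith
    linarith
  have h1mρ : 1 - ρ ≤ α * (8*η) := by
    have : ρ = Real.exp (-(α * Real.log k)) := by
      rw [hρ, Real.rpow_def_of_pos hk0]; ring_nf
    have hb : 1 - Real.exp (-(α * Real.log k)) ≤ α * Real.log k := by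
      nlinarith [Real.add_one_le_exp (-(α * Real.log k))]
    have hlk : 0 ≤ Real.log k := Real.log_nonneg hk1.le
    nlinarith
  -- bound 1/ρ ≤ 2^(4α)
  have hinv : 1/ρ ≤ (2:ℝ) ^ (4*α) := by
    have e1 : 1/ρ = k ^ α := by
      rw [hρ, one_div, Real.rpow_neg hk0.le, inv_inv]
    have hk16 : k ≤ 16 := by
      have hb0 : (0:ℝ) ≤ (1+η)/(1-η) := by positivity
      have h3' : (1+η)/(1-η) ≤ 3 := by rw [div_le_iff₀ h1η]; linarith
      have := pow_le_pow_left₀ hb0 h3' 2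
      rw [hk]; nlinarith [this]
    have e2 : (2:ℝ) ^ (4*α) = (16:ℝ) ^ α := by
      have : (16:ℝ) = (2:ℝ) ^ (4:ℝ) := by
        rw [show ((4:ℝ)) = ((4:ℕ):ℝ) by norm_num, Real.rpow_natCast]; norm_num
      rw [this, ← Real.rpow_mul (by norm_num)]
    rw [e1, e2]
    exact Real.rpow_le_rpow hk0.le hk16 hα.le
  have efin : α * 2 ^ (4*α+3) * η = α * (8*η) * (2:ℝ) ^ (4*α) := by
    rw [Real.rpow_add (by norm_num : (0:ℝ) < 2)]
    have : (2:ℝ) ^ (3:ℝ) = 8 := by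
      rw [show ((3:ℝ)) = ((3:ℕ):ℝ) by norm_num, Real.rpow_natCast]; norm_num
    rw [this]; ring
  have hpow0 : (0:ℝ) ≤ (2:ℝ) ^ (4*α) := (Real.rpow_pos_of_pos two_pos _).le
  have h1ρ0 : 0 ≤ 1 - ρ := by linarith
  calc Real.exp (-(ρ*s)) - Real.exp (-s) ≤ (1-ρ) * (1/ρ) := h3
    _ ≤ (α * (8*η)) * (2:ℝ) ^ (4*α) := by
        apply mul_le_mul h1mρ hinv (by positivity) (by positivity)
    _ = α * 2 ^ (4*α+3) * η := by rw [efin]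

theorem frechet_ratio_cdf_perturbation
    {Ω : Type*} [MeasurableSpace Ω] (μ : Measure Ω) [IsProbabilityMeasure μ]
    (α : ℝ) (hα : 0 < α) (Z' Z'' : Ω → ℝ)
    (hm' : Measurable Z') (hm'' : Measurable Z'')
    (hindep : IndepFun Z' Z'' μ)
    (hcdf' : ∀ x : ℝ, 0 < x →
      μ {ω | Z' ω ≤ x} = ENNReal.ofReal (Real.exp (-(x ^ (-α)))))
    (hcdf'0 : ∀ x : ℝ, x ≤ 0 → μ {ω | Z' ω ≤ x} = 0)
    (hcdf'' : ∀ x : ℝ, 0 < x →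
      μ {ω | Z'' ω ≤ x} = ENNReal.ofReal (Real.exp (-(x ^ (-α)))))
    (hcdf''0 : ∀ x : ℝ, x ≤ 0 → μ {ω | Z'' ω ≤ x} = 0)
    (c η : ℝ) (hc : 0 < c) (hη : η ∈ Set.Ioo (0 : ℝ) (1 / 2)) :
    ∀ x : ℝ, 0 < x →
      |(μ {ω | c * ((1 - η) / (1 + η)) * Z' ω / Z'' ω ≤ x}).toReal
          - (μ {ω | c * ((1 + η) / (1 - η)) * Z' ω / Z'' ω ≤ x}).toReal|
        ≤ α * 2 ^ (4 * α + 3) * η := by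
  obtain ⟨hη0, hη2⟩ := hη
  intro x hx
  have h1η : (0:ℝ) < 1 - η := by linarith
  have h1η' : (0:ℝ) < 1 + η := by linarith
  set r1 : ℝ := (1 - η) / (1 + η) with hr1
  set r2 : ℝ := (1 + η) / (1 - η) with hr2
  have hr1p : 0 < r1 := by positivity
  have hr2p : 0 < r2 := by positivity
  set ta : ℝ := x / (c * r2) with hta
  set tb : ℝ := x / (c * r1) with htb
  have htap : 0 < ta := by positivity
  have htbp : 0 < tb := by positivity
  set k : ℝ := ((1+η)/(1-η))^2 with hk
  have hk0 : (0:ℝ) < k := by positivity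
  have htbk : tb = k * ta := by
    rw [hta, htb, hk, hr1, hr2]; field_simp
  have htab : ta ≤ tb := by
    rw [htbk]
    have hk1 : 1 ≤ k := by
      rw [hk]
      have : 1 ≤ (1+η)/(1-η) := by rw [le_div_iff₀ h1η]; linarith
      nlinarith
    nlinarith
  have hP0 : μ {ω | Z'' ω ≤ 0} = 0 := hcdf''0 0 le_rfl
  -- events
  set E : ℝ → Set Ω := fun t => {ω | Z' ω ≤ t * Z'' ω ∧ 0 < Z'' ω} with hE
  -- Step A
  have stepA : ∀ r : ℝ, 0 < r →
      μ {ω | c * r * Z' ω / Z'' ω ≤ x} = μ (E (x / (c * r))) := by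
    intro r hr
    have hcr : 0 < c * r := by positivity
    apply le_antisymm
    · calc μ {ω | c * r * Z' ω / Z'' ω ≤ x}
          ≤ μ (E (x / (c * r)) ∪ {ω | Z'' ω ≤ 0}) := by
            apply measure_mono
            intro ω hω
            rcases le_or_gt (Z'' ω) 0 with h | h
            · exact Or.inr h
            · refine Or.inl ⟨?_, h⟩
              have h0 := (div_le_iff₀ h).mp hω
              rw [div_mul_eq_mul_div, le_div_iff₀ hcr]
              nlinarith [h0]
        _ ≤ μ (E (x / (c * r))) + μ {ω | Z'' ω ≤ 0} := measure_union_le _ _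
        _ = μ (E (x / (c * r))) := by rw [hP0, add_zero]
    · apply measure_mono
      rintro ω ⟨h1, h2⟩
      simp only [Set.mem_setOf_eq]
      rw [div_le_iff₀ h2]
      calc c * r * Z' ω ≤ c * r * (x / (c * r) * Z'' ω) := by
            have := mul_le_mul_of_nonneg_left h1 hcr.le
            linarith [this]
        _ = x * Z'' ω := by field_simp
  have hEab : E ta ⊆ E tb := by
    rintro ω ⟨h1, h2⟩
    exact ⟨h1.trans (by nlinarith), h2⟩
  -- measures of marginals / joint
  set ν' : Measure ℝ := μ.map Z' with hν'
  set ν'' : Measure ℝ := μ.map Z'' with hν''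
  have hjoint : μ.map (fun ω => (Z' ω, Z'' ω)) = ν'.prod ν'' :=
    (indepFun_iff_map_prod_eq_prod_map_map hm'.aemeasurable hm''.aemeasurable).mp hindep
  have hν''prob : IsProbabilityMeasure ν'' := Measure.isProbabilityMeasure_map hm''.aemeasurable
  set M : ℝ := α * 2 ^ (4 * α + 3) * η with hM
  have hM0 : 0 ≤ M := by positivity
  -- key bound on the difference set
  set D : Set (ℝ × ℝ) := {p : ℝ × ℝ | ta * p.2 < p.1 ∧ p.1 ≤ tb * p.2 ∧ 0 < p.2} with hD
  have hDm : MeasurableSet D := by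
    apply MeasurableSet.inter
    · exact measurableSet_lt (measurable_snd.const_mul ta) measurable_fst
    · exact (measurableSet_le measurable_fst (measurable_snd.const_mul tb)).inter
        (measurableSet_lt measurable_const measurable_snd)
  have hslice : ∀ y : ℝ, ν' ((fun x => (x, y)) ⁻¹' D) ≤ ENNReal.ofReal M := by
    intro y
    rcases le_or_gt y 0 with hy | hy
    · have : (fun x => (x, y)) ⁻¹' D = ∅ := by
        ext z; simp only [Set.mem_preimage, hD, Set.mem_setOf_eq, Set.mem_empty_iff_false,
          iff_false]
        rintro ⟨-, -, h⟩; linarith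
      rw [this]; simp
    · have hset : (fun x => (x, y)) ⁻¹' D = Set.Ioc (ta * y) (tb * y) := by
        ext z; simp [hD, Set.mem_Ioc, hy, and_comm]
      have hIic : ∀ t : ℝ, 0 < t → ν' (Set.Iic t) = ENNReal.ofReal (Real.exp (-(t ^ (-α)))) := by
        intro t ht
        rw [hν', Measure.map_apply hm' measurableSet_Iic]
        exact hcdf' t ht
      have hay : 0 < ta * y := by positivity
      have hby : 0 < tb * y := by positivity
      have hdiff : Set.Ioc (ta * y) (tb * y) = Set.Iic (tb * y) \ Set.Iic (ta * y) := by
        ext z; simp [Set.mem_Ioc, Set.mem_diff, and_comm]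
      rw [hset, hdiff, measure_diff (Set.Iic_subset_Iic.mpr (by nlinarith))
        measurableSet_Iic.nullMeasurableSet
        (by rw [hIic _ hay]; exact ENNReal.ofReal_ne_top),
        hIic _ hby, hIic _ hay,
        ← ENNReal.ofReal_sub _ (Real.exp_pos _).le]
      apply ENNReal.ofReal_le_ofReal
      have hbay : (tb * y) ^ (-α) = k ^ (-α) * (ta * y) ^ (-α) := by
        rw [htbk, mul_assoc, Real.mul_rpow hk0.le (by positivity)]
      rw [hbay]
      exact key_real α hα η hη0 hη2 ((ta * y) ^ (-α)) (Real.rpow_pos_of_pos hay _)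
  have hdiffbound : μ (E tb \ E ta) ≤ ENNReal.ofReal M := by
    have hsub : E tb \ E ta ⊆ (fun ω => (Z' ω, Z'' ω)) ⁻¹' D := by
      rintro ω ⟨⟨h1, h2⟩, h3⟩
      simp only [Set.mem_preimage, hD, Set.mem_setOf_eq]
      refine ⟨?_, h1, h2⟩
      by_contra hcon
      push_neg at hcon
      exact h3 ⟨hcon, h2⟩
    calc μ (E tb \ E ta) ≤ μ ((fun ω => (Z' ω, Z'' ω)) ⁻¹' D) := measure_mono hsub
      _ = (μ.map (fun ω => (Z' ω, Z'' ω))) D := by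
          rw [Measure.map_apply (hm'.prodMk hm'') hDm]
      _ = (ν'.prod ν'') D := by rw [hjoint]
      _ = ∫⁻ y, ν' ((fun x => (x, y)) ⁻¹' D) ∂ν'' := Measure.prod_apply_symm hDm
      _ ≤ ∫⁻ _, ENNReal.ofReal M ∂ν'' := lintegral_mono hslice
      _ = ENNReal.ofReal M := by rw [lintegral_const, measure_univ, mul_one]
  -- assemble
  have hS1 := stepA r1 hr1p
  have hS2 := stepA r2 hr2p
  rw [hS1, hS2, ← hta, ← htb]
  have hle : μ (E ta) ≤ μ (E tb) := measure_mono hEab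
  have hub : μ (E tb) ≤ μ (E ta) + ENNReal.ofReal M := by
    calc μ (E tb) = μ (E ta ∪ (E tb \ E ta)) := by
          rw [Set.union_diff_cancel hEab]
      _ ≤ μ (E ta) + μ (E tb \ E ta) := measure_union_le _ _
      _ ≤ μ (E ta) + ENNReal.ofReal M := add_le_add_right hdiffbound _
  have hfa : μ (E ta) ≠ ⊤ := measure_ne_top μ _
  have hfb : μ (E tb) ≠ ⊤ := measure_ne_top μ _
  rw [abs_of_nonneg (by
    have := ENNReal.toReal_mono hfb hle
    linarith)]
  have := ENNReal.toReal_mono (by finiteness) hub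
  rw [ENNReal.toReal_add hfa ENNReal.ofReal_ne_top, ENNReal.toReal_ofReal hM0] at this
  linarith
end
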